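/- Let V be a Volterra operator with a_{ki} < 0 for all k < i. If x ∈ S has finite support with maximum m₀, then Vⁿ(x) converges in ℓ¹-norm to e_{m₀}. -/
import Mathlib


open Filter Topology

theorem stmt_18 (a : ℕ → ℕ → ℝ)
    (hskew : ∀ k i, a k i = -a i k) (hbd : ∀ k i, |a k i| ≤ 1)
    (hneg : ∀ k i, k < i → a k i < 0)
    (V : (ℕ → ℝ) → (ℕ → ℝ))
    (hV : ∀ x k, V x k = x k * (1 + ∑' i, a k i * x i))
    (x : ℕ → ℝ) (hx : (∀ k, 0 ≤ x k) ∧ Summable x ∧ ∑' k, x k = 1)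
    (m₀ : ℕ) (hm₀ : x m₀ ≠ 0) (hmax : ∀ i, x i ≠ 0 → i ≤ m₀) :
    Tendsto (fun n => ∑' k, |(V^[n] x) k - (if k = m₀ then (1 : ℝ) else 0)|)
      atTop (𝓝 0) := by
  obtain ⟨hx0, hxsum, hx1⟩ := hx
  have hdiag : ∀ k, a k k = 0 := fun k => by have := hskew k k; linarith
  have hapos : ∀ i, i < m₀ → 0 < a m₀ i := by
    intro i hi
    have h1 := hneg i m₀ hi
    have h2 := hskew m₀ i
    linarith
  have hmF : m₀ ∈ Finset.range (m₀ + 1) := Finset.self_mem_range_succ m₀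
  set P : (ℕ → ℝ) → Prop := fun z => (∀ k, 0 ≤ z k) ∧ (∀ k, m₀ < k → z k = 0) ∧
      ∑ k ∈ Finset.range (m₀ + 1), z k = 1 with hPdef
  have hPx : P x := by
    refine ⟨hx0, ?_, ?_⟩
    · intro k hk
      by_contra h
      exact absurd (hmax k h) (by omega)
    · rw [← hx1]
      exact (tsum_eq_sum (fun k hk => by
        by_contra h
        exact hk (Finset.mem_range.mpr (Nat.lt_succ_of_le (hmax k h))))).symm
  have htsum : ∀ z, P z → ∀ k, ∑' i, a k i * z i = ∑ i ∈ Finset.range (m₀ + 1), a k i * z i := by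
    intro z hz k
    refine tsum_eq_sum (fun i hi => ?_)
    rw [hz.2.1 i (by simp only [Finset.mem_range] at hi; omega), mul_zero]
  have hPstep : ∀ z, P z → P (V z) := by
    rintro z hz
    obtain ⟨h0, hsupp, hsum⟩ := hz
    have hbnd : ∀ k, |∑ i ∈ Finset.range (m₀ + 1), a k i * z i| ≤ 1 := by
      intro k
      calc |∑ i ∈ Finset.range (m₀ + 1), a k i * z i|
          ≤ ∑ i ∈ Finset.range (m₀ + 1), |a k i * z i| := Finset.abs_sum_le_sum_abs _ _
        _ ≤ ∑ i ∈ Finset.range (m₀ + 1), z i := Finset.sum_le_sum (fun i _ => by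
            rw [abs_mul, abs_of_nonneg (h0 i)]
            nlinarith [hbd k i, abs_nonneg (a k i), h0 i])
        _ = 1 := hsum
    refine ⟨?_, ?_, ?_⟩
    · intro k
      rw [hV, htsum z ⟨h0, hsupp, hsum⟩]
      have h := abs_le.1 (hbnd k)
      nlinarith [h0 k]
    · intro k hk
      rw [hV, hsupp k hk, zero_mul]
    · have hexp : ∀ k ∈ Finset.range (m₀ + 1),
          V z k = z k + ∑ i ∈ Finset.range (m₀ + 1), a k i * z k * z i := by
        intro k _
        rw [hV, htsum z ⟨h0, hsupp, hsum⟩, mul_add, mul_one, Finset.mul_sum]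
        exact congrArg _ (Finset.sum_congr rfl (fun i _ => by ring))
      have key : ∑ k ∈ Finset.range (m₀ + 1), ∑ i ∈ Finset.range (m₀ + 1),
          a i k * z i * z k = ∑ k ∈ Finset.range (m₀ + 1), ∑ i ∈ Finset.range (m₀ + 1),
          a k i * z k * z i := Finset.sum_comm
      have h1 : ∑ k ∈ Finset.range (m₀ + 1), ∑ i ∈ Finset.range (m₀ + 1), a k i * z k * z i
          = ∑ k ∈ Finset.range (m₀ + 1), ∑ i ∈ Finset.range (m₀ + 1), -(a i k * z i * z k) :=
        Finset.sum_congr rfl fun k _ => Finset.sum_congr rfl fun i _ => by rw [hskew k i]; ring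
      simp only [Finset.sum_neg_distrib] at h1
      have hD : ∑ k ∈ Finset.range (m₀ + 1), ∑ i ∈ Finset.range (m₀ + 1),
          a k i * z k * z i = 0 := by linarith [key, h1]
      calc ∑ k ∈ Finset.range (m₀ + 1), V z k
          = ∑ k ∈ Finset.range (m₀ + 1), (z k + ∑ i ∈ Finset.range (m₀ + 1), a k i * z k * z i) :=
            Finset.sum_congr rfl hexp
        _ = 1 + ∑ k ∈ Finset.range (m₀ + 1), ∑ i ∈ Finset.range (m₀ + 1), a k i * z k * z i := by
            rw [Finset.sum_add_distrib, hsum]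
        _ = 1 := by rw [hD, add_zero]
  set y : ℕ → ℕ → ℝ := fun n => V^[n] x with hy
  have hPy : ∀ n, P (y n) := by
    intro n
    induction n with
    | zero => exact hPx
    | succ n ih =>
        have : y (n + 1) = V (y n) := Function.iterate_succ_apply' V n x
        rw [this]
        exact hPstep _ ih
  have hy0 : ∀ n k, 0 ≤ y n k := fun n => (hPy n).1
  have hysupp : ∀ n k, m₀ < k → y n k = 0 := fun n => (hPy n).2.1
  have hysum : ∀ n, ∑ k ∈ Finset.range (m₀ + 1), y n k = 1 := fun n => (hPy n).2.2
  set s : ℕ → ℝ := fun n => ∑ i ∈ Finset.range m₀, a m₀ i * y n i with hs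
  have hrec : ∀ n, y (n + 1) m₀ = y n m₀ * (1 + s n) := by
    intro n
    have h1 : y (n + 1) = V (y n) := Function.iterate_succ_apply' V n x
    rw [h1, hV, htsum _ (hPy n), Finset.sum_range_succ, hdiag, zero_mul, add_zero]
  have hsnn : ∀ n, 0 ≤ s n := fun n =>
    Finset.sum_nonneg fun i hi => mul_nonneg (hapos i (Finset.mem_range.1 hi)).le (hy0 n i)
  have hc : 0 < x m₀ := (hx0 m₀).lt_of_ne (Ne.symm hm₀)
  have hylb : ∀ n, x m₀ ≤ y n m₀ := by
    intro n
    induction n with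
    | zero => exact le_refl _
    | succ n ih => rw [hrec n]; nlinarith [hsnn n]
  have hyub : ∀ n, y n m₀ ≤ 1 := by
    intro n
    calc y n m₀ ≤ ∑ k ∈ Finset.range (m₀ + 1), y n k :=
          Finset.single_le_sum (fun k _ => hy0 n k) hmF
      _ = 1 := hysum n
  have hdiff : ∀ n, x m₀ * s n ≤ y (n + 1) m₀ - y n m₀ := by
    intro n
    rw [hrec n]
    nlinarith [hsnn n, hylb n]
  have hpart : ∀ N, ∑ n ∈ Finset.range N, s n ≤ 1 / x m₀ := by
    intro N
    have h1 : x m₀ * ∑ n ∈ Finset.range N, s n ≤ y N m₀ - y 0 m₀ := by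
      rw [Finset.mul_sum]
      calc ∑ n ∈ Finset.range N, x m₀ * s n
          ≤ ∑ n ∈ Finset.range N, (y (n + 1) m₀ - y n m₀) :=
            Finset.sum_le_sum fun n _ => hdiff n
        _ = y N m₀ - y 0 m₀ := Finset.sum_range_sub (fun n => y n m₀) N
    have h2 : y N m₀ - y 0 m₀ ≤ 1 := by linarith [hyub N, hy0 0 m₀]
    rw [le_div_iff₀ hc]
    nlinarith
  have hstend : Tendsto s atTop (𝓝 0) :=
    (summable_of_sum_range_le hsnn hpart).tendsto_atTop_zero
  have hcoord : ∀ i, i < m₀ → Tendsto (fun n => y n i) atTop (𝓝 0) := by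
    intro i hi
    have hterm : Tendsto (fun n => a m₀ i * y n i) atTop (𝓝 0) := by
      refine squeeze_zero (fun n => mul_nonneg (hapos i hi).le (hy0 n i)) (fun n => ?_) hstend
      exact Finset.single_le_sum
        (fun j hj => mul_nonneg (hapos j (Finset.mem_range.1 hj)).le (hy0 n j))
        (Finset.mem_range.mpr hi)
    have h2 := hterm.const_mul (a m₀ i)⁻¹
    simpa [inv_mul_cancel_left₀ (hapos i hi).ne'] using h2
  have hT : Tendsto (fun n => ∑ i ∈ Finset.range m₀, y n i) atTop (𝓝 0) := by
    have := tendsto_finset_sum (Finset.range m₀)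
      (fun i hi => hcoord i (Finset.mem_range.1 hi))
    simpa using this
  have hgoal : ∀ n, (∑' k, |y n k - (if k = m₀ then (1 : ℝ) else 0)|)
      = 2 * ∑ i ∈ Finset.range m₀, y n i := by
    intro n
    have h1 : (∑' k, |y n k - (if k = m₀ then (1 : ℝ) else 0)|)
        = ∑ k ∈ Finset.range (m₀ + 1), |y n k - (if k = m₀ then (1 : ℝ) else 0)| := by
      refine tsum_eq_sum fun k hk => ?_
      have hk' : m₀ < k := by simp only [Finset.mem_range] at hk; omega
      rw [hysupp n k hk', if_neg (by omega)]
      simp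
    have h2 : ∀ k ∈ Finset.range m₀, |y n k - (if k = m₀ then (1 : ℝ) else 0)| = y n k := by
      intro k hk
      have hk' : k < m₀ := Finset.mem_range.1 hk
      rw [if_neg (by omega)]
      simpa using abs_of_nonneg (hy0 n k)
    have h3 : y n m₀ = 1 - ∑ i ∈ Finset.range m₀, y n i := by
      have h := hysum n
      rw [Finset.sum_range_succ] at h
      linarith
    have h4 : |y n m₀ - (if m₀ = m₀ then (1 : ℝ) else 0)| = 1 - y n m₀ := by
      rw [if_pos rfl, abs_of_nonpos (by linarith [hyub n])]
      ring
    rw [h1, Finset.sum_range_succ, Finset.sum_congr rfl h2, h4, h3]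
    ring
  have final : Tendsto (fun n => 2 * ∑ i ∈ Finset.range m₀, y n i) atTop (𝓝 0) := by
    have := hT.const_mul 2
    simpa using this
  exact final.congr fun n => (hgoal n).symm
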